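/- Let X, u, a mesh (d_n) with partial sums t_n, and x_n := ρ_n u(t_n) be as in the standing construction. Let n ≥ 1 and let I be a nonempty subset of {1,…,n}, and set δ := max{ |t_i − t_j| : i, j ∈ I }. Then ‖(1/n) ∑_{k=1}^n x_k‖ ≥ (#I / n) · ρ_∞ · exp(−δ^2/2) > 0, where #I is the cardinality of I. -/

import Mathlib

open Filter
open scoped RealInnerProductSpace

/-- A mesh: positive step sizes `d n` (for `n ≥ 1`) with square-summable
increments, partial sums `t n = ∑_{k=1}^{n-1} d k` tending to `+∞`,
`d 1 ≤ 1/8` and `d (n+1) ≤ d n / (1 + 64 d n ²)`. -/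
def IsMesh (d : ℕ → ℝ) : Prop :=
  (∀ n : ℕ, 1 ≤ n → 0 < d n) ∧
  (Summable fun k : ℕ => d (k + 1) ^ 2) ∧
  Tendsto (fun n : ℕ => ∑ k ∈ Finset.Ico 1 n, d k) atTop atTop ∧
  d 1 ≤ 1 / 8 ∧
  (∀ n : ℕ, 1 ≤ n → d (n + 1) ≤ d n / (1 + 64 * d n ^ 2))

/-- Lower bound for the Cesàro mean: if `I ⊆ {1,…,n}` is nonempty and
`δ = max {|t i − t j| : i, j ∈ I}`, then
`‖(1/n) ∑_{k=1}^n x k‖ ≥ (#I/n) ρ_∞ exp (-δ²/2) > 0`. -/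
theorem cesaro_lower_bound {X : Type*} [NormedAddCommGroup X] [InnerProductSpace ℝ X] [CompleteSpace X]
    (u : ℝ → X)
    (hu : ∀ s : ℝ, 0 ≤ s → ∀ t : ℝ, 0 ≤ t → ⟪u s, u t⟫ = Real.exp (-(s - t) ^ 2))
    (d : ℕ → ℝ) (hd : IsMesh d)
    (t : ℕ → ℝ) (ht : ∀ n, t n = ∑ k ∈ Finset.Ico 1 n, d k)
    (ρ : ℕ → ℝ) (hρ : ∀ n, ρ n = Real.exp (-(∑ k ∈ Finset.Ico 1 n, d k ^ 2)))
    (x : ℕ → X) (hx : ∀ n, x n = ρ n • u (t n))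
    (n : ℕ) (hn : 1 ≤ n) (I : Finset ℕ) (hI : I.Nonempty)
    (hIsub : I ⊆ Finset.Icc 1 n)
    (δ : ℝ)
    (hδ : δ = (I ×ˢ I).sup' (hI.product hI) fun p => |t p.1 - t p.2|) :
    0 < (I.card : ℝ) / n * Real.exp (-∑' k : ℕ, d (k + 1) ^ 2) *
        Real.exp (-δ ^ 2 / 2) ∧
    (I.card : ℝ) / n * Real.exp (-∑' k : ℕ, d (k + 1) ^ 2) *
        Real.exp (-δ ^ 2 / 2) ≤
      ‖(1 / (n : ℝ)) • ∑ k ∈ Finset.Icc 1 n, x k‖ := by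
  obtain ⟨hdpos, hdsum, -, -, -⟩ := hd
  have hn0 : (0 : ℝ) < n := by exact_mod_cast hn
  have htnn : ∀ k, 1 ≤ k → 0 ≤ t k := by
    intro k hk
    rw [ht]
    exact Finset.sum_nonneg fun j hj => (hdpos j (Finset.mem_Ico.1 hj).1).le
  have hρpos : ∀ k, 0 < ρ k := fun k => by rw [hρ]; exact Real.exp_pos _
  have hrhoinf : ∀ k, Real.exp (-∑' j : ℕ, d (j + 1) ^ 2) ≤ ρ k := by
    intro k
    rw [hρ, Real.exp_le_exp, neg_le_neg_iff]
    rw [Finset.sum_Ico_eq_sum_range]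
    calc ∑ i ∈ Finset.range (k - 1), d (1 + i) ^ 2
        = ∑ i ∈ Finset.range (k - 1), d (i + 1) ^ 2 := by
          refine Finset.sum_congr rfl fun i _ => by rw [add_comm]
      _ ≤ ∑' j : ℕ, d (j + 1) ^ 2 := Summable.sum_le_tsum _ (fun i _ => sq_nonneg _) hdsum
  set A := I.inf' hI t with hA
  set B := I.sup' hI t with hB
  obtain ⟨i0, hi0I, hi0⟩ := I.exists_mem_eq_sup' hI t
  obtain ⟨j0, hj0I, hj0⟩ := I.exists_mem_eq_inf' hI t
  have hδnn : 0 ≤ δ := by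
    have h := Finset.le_sup' (fun p : ℕ × ℕ => |t p.1 - t p.2|)
      (Finset.mk_mem_product hi0I hi0I)
    rw [hδ]; exact (abs_nonneg _).trans h
  have hBA : B - A ≤ δ := by
    have h := Finset.le_sup' (fun p : ℕ × ℕ => |t p.1 - t p.2|)
      (Finset.mk_mem_product hi0I hj0I)
    rw [hδ]
    calc B - A = t i0 - t j0 := by rw [hB, hA, hi0, hj0]
      _ ≤ |t i0 - t j0| := le_abs_self _
      _ ≤ _ := h
  set τ := (A + B) / 2 with hτ
  have hAnn : 0 ≤ A := by
    rw [hA, hj0]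
    exact htnn j0 (Finset.mem_Icc.1 (hIsub hj0I)).1
  have hAB : A ≤ B := by
    rw [hA, hB, hi0]
    exact Finset.inf'_le t hi0I
  have hτnn : 0 ≤ τ := by rw [hτ]; linarith
  have hkey : ∀ k ∈ I, (t k - τ) ^ 2 ≤ δ ^ 2 / 2 := by
    intro k hk
    have h1 : A ≤ t k := Finset.inf'_le t hk
    have h2 : t k ≤ B := Finset.le_sup' t hk
    have h3 : (0:ℝ) ≤ (t k - A) * (B - t k) :=
      mul_nonneg (by linarith) (by linarith)
    nlinarith [sq_nonneg (B - A), sq_nonneg δ]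
  have hw : ‖u τ‖ = 1 := by
    have h1 : ⟪u τ, u τ⟫ = 1 := by
      rw [hu τ hτnn τ hτnn]
      simp
    have h2 : ‖u τ‖ ^ 2 = 1 := by rw [← real_inner_self_eq_norm_sq, h1]
    nlinarith [norm_nonneg (u τ)]
  have hinner : ⟪(1 / (n : ℝ)) • ∑ k ∈ Finset.Icc 1 n, x k, u τ⟫
      = (1 / (n : ℝ)) * ∑ k ∈ Finset.Icc 1 n, ρ k * Real.exp (-(t k - τ) ^ 2) := by
    rw [real_inner_smul_left, sum_inner]
    congr 1
    refine Finset.sum_congr rfl fun k hk => ?_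
    rw [hx, real_inner_smul_left, hu (t k) (htnn k (Finset.mem_Icc.1 hk).1) τ hτnn]
  have hterm : ∀ k ∈ I, Real.exp (-∑' j : ℕ, d (j + 1) ^ 2) * Real.exp (-δ ^ 2 / 2)
      ≤ ρ k * Real.exp (-(t k - τ) ^ 2) := by
    intro k hk
    apply mul_le_mul (hrhoinf k) _ (Real.exp_pos _).le (hρpos k).le
    rw [Real.exp_le_exp]
    have := hkey k hk
    linarith
  have hsum : (I.card : ℝ) * (Real.exp (-∑' j : ℕ, d (j + 1) ^ 2) * Real.exp (-δ ^ 2 / 2))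
      ≤ ∑ k ∈ Finset.Icc 1 n, ρ k * Real.exp (-(t k - τ) ^ 2) := by
    calc (I.card : ℝ) * (Real.exp (-∑' j : ℕ, d (j + 1) ^ 2) * Real.exp (-δ ^ 2 / 2))
        = ∑ _k ∈ I, Real.exp (-∑' j : ℕ, d (j + 1) ^ 2) * Real.exp (-δ ^ 2 / 2) := by
          rw [Finset.sum_const, nsmul_eq_mul]
      _ ≤ ∑ k ∈ I, ρ k * Real.exp (-(t k - τ) ^ 2) := Finset.sum_le_sum hterm
      _ ≤ ∑ k ∈ Finset.Icc 1 n, ρ k * Real.exp (-(t k - τ) ^ 2) :=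
          Finset.sum_le_sum_of_subset_of_nonneg hIsub
            (fun k _ _ => mul_nonneg (hρpos k).le (Real.exp_pos _).le)
  have hcard : (0 : ℝ) < I.card := by exact_mod_cast Finset.card_pos.2 hI
  constructor
  · exact mul_pos (mul_pos (div_pos hcard hn0) (Real.exp_pos _)) (Real.exp_pos _)
  · calc (I.card : ℝ) / n * Real.exp (-∑' k : ℕ, d (k + 1) ^ 2) * Real.exp (-δ ^ 2 / 2)
        = (1 / (n : ℝ)) * ((I.card : ℝ) *
            (Real.exp (-∑' j : ℕ, d (j + 1) ^ 2) * Real.exp (-δ ^ 2 / 2))) := by ring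
      _ ≤ (1 / (n : ℝ)) * ∑ k ∈ Finset.Icc 1 n, ρ k * Real.exp (-(t k - τ) ^ 2) :=
          mul_le_mul_of_nonneg_left hsum (by positivity)
      _ = ⟪(1 / (n : ℝ)) • ∑ k ∈ Finset.Icc 1 n, x k, u τ⟫ := hinner.symm
      _ ≤ ‖(1 / (n : ℝ)) • ∑ k ∈ Finset.Icc 1 n, x k‖ * ‖u τ‖ := real_inner_le_norm _ _
      _ = ‖(1 / (n : ℝ)) • ∑ k ∈ Finset.Icc 1 n, x k‖ := by rw [hw, mul_one]
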